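/- Let 1/2 < ε < 1 and let p ≥ q ≥ r/(1-ε) be positive integers with p ≥ q. Then every ε-separator of the p × q × r grid graph has size at least ((1-ε)/(1+ε))·q·r. -/

import Mathlib

set_option maxHeartbeats 1000000

/-- `S` is an `ε`-separator of `G`: every connected component of `G − S`
has at most `ε·|V(G)|` vertices. -/
def IsSeparator {V : Type} [Fintype V] (G : SimpleGraph V) (ε : ℝ) (S : Set V) : Prop :=
  ∀ C : (G.induce Sᶜ).ConnectedComponent, (C.supp.ncard : ℝ) ≤ ε * Fintype.card V

/-- The `p × q × r` grid graph on vertex set `Fin p × Fin q × Fin r`. -/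
def grid3 (p q r : ℕ) : SimpleGraph (Fin p × Fin q × Fin r) :=
  SimpleGraph.fromRel (fun a b =>
    (a.2 = b.2 ∧ a.1.val + 1 = b.1.val) ∨
    (a.1 = b.1 ∧ a.2.2 = b.2.2 ∧ a.2.1.val + 1 = b.2.1.val) ∨
    (a.1 = b.1 ∧ a.2.1 = b.2.1 ∧ a.2.2.val + 1 = b.2.2.val))


namespace Grid3Sep


variable {p q r : ℕ} {S : Set (Fin p × Fin q × Fin r)}

/-- Reachability in the grid minus `S`. -/
def Rch (S : Set (Fin p × Fin q × Fin r)) (v w : Fin p × Fin q × Fin r) : Prop :=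
  ∃ (hv : v ∈ Sᶜ) (hw : w ∈ Sᶜ),
    ((grid3 p q r).induce Sᶜ).Reachable ⟨v, hv⟩ ⟨w, hw⟩

lemma Rch.refl {v} (hv : v ∉ S) : Rch S v v := ⟨hv, hv, by rfl⟩

lemma Rch.symm {v w} (h : Rch S v w) : Rch S w v := by
  obtain ⟨hv, hw, h⟩ := h; exact ⟨hw, hv, h.symm⟩

lemma Rch.trans {u v w} (h1 : Rch S u v) (h2 : Rch S v w) : Rch S u w := by
  obtain ⟨hu, hv, h1⟩ := h1
  obtain ⟨hv', hw, h2⟩ := h2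
  exact ⟨hu, hw, h1.trans h2⟩

lemma Rch.notMem {v w} (h : Rch S v w) : v ∉ S := h.1

lemma Rch_adj {v w} (hv : v ∉ S) (hw : w ∉ S) (h : (grid3 p q r).Adj v w) :
    Rch S v w := by
  refine ⟨hv, hw, SimpleGraph.Adj.reachable ?_⟩
  simpa [SimpleGraph.comap] using h

lemma adjX (i i' : Fin p) (j : Fin q) (k : Fin r) (h : (i : ℕ) + 1 = (i' : ℕ)) :
    (grid3 p q r).Adj (i, j, k) (i', j, k) := by
  rw [grid3, SimpleGraph.fromRel_adj]
  constructor
  · simp only [ne_eq, Prod.mk.injEq]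
    rintro ⟨h1, -⟩; rw [Fin.ext_iff] at h1; omega
  · left; left; exact ⟨rfl, h⟩

lemma adjY (i : Fin p) (j j' : Fin q) (k : Fin r) (h : (j : ℕ) + 1 = (j' : ℕ)) :
    (grid3 p q r).Adj (i, j, k) (i, j', k) := by
  rw [grid3, SimpleGraph.fromRel_adj]
  constructor
  · simp only [ne_eq, Prod.mk.injEq]
    rintro ⟨-, h1, -⟩; rw [Fin.ext_iff] at h1; omega
  · left; right; left; exact ⟨rfl, rfl, h⟩

lemma adjZ (i : Fin p) (j : Fin q) (k k' : Fin r) (h : (k : ℕ) + 1 = (k' : ℕ)) :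
    (grid3 p q r).Adj (i, j, k) (i, j, k') := by
  rw [grid3, SimpleGraph.fromRel_adj]
  constructor
  · simp only [ne_eq, Prod.mk.injEq]
    rintro ⟨-, -, h1⟩; rw [Fin.ext_iff] at h1; omega
  · left; right; right; exact ⟨rfl, rfl, h⟩

lemma chainX_aux (j : Fin q) (k : Fin r) :
    ∀ (n a : ℕ) (h : a + n < p),
      (∀ t : Fin p, a ≤ (t : ℕ) → (t : ℕ) ≤ a + n → ((t, j, k) : Fin p × Fin q × Fin r) ∉ S) →
      Rch S (⟨a, by omega⟩, j, k) (⟨a + n, h⟩, j, k) := by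
  intro n
  induction n with
  | zero =>
    intro a h hfree
    exact Rch.refl (hfree ⟨a, h⟩ (by simp) (by simp))
  | succ n ih =>
    intro a h hfree
    have h' : a + n < p := by omega
    have step : Rch S (⟨a + n, h'⟩, j, k) (⟨a + n + 1, by omega⟩, j, k) := by
      refine Rch_adj (hfree _ (by simp only [Fin.val_mk]; try omega) (by simp only [Fin.val_mk]; try omega))
        (hfree _ (by simp only [Fin.val_mk]; try omega) (by simp only [Fin.val_mk]; try omega))
        (adjX _ _ _ _ (by simp only [Fin.val_mk]; try omega))
    exact (ih a h' (fun t ht1 ht2 => hfree t ht1 (by omega))).trans step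

lemma chainX_le (i i' : Fin p) (j : Fin q) (k : Fin r) (hle : (i : ℕ) ≤ (i' : ℕ))
    (hfree : ∀ t : Fin p, (i : ℕ) ≤ (t : ℕ) → (t : ℕ) ≤ (i' : ℕ) →
      ((t, j, k) : Fin p × Fin q × Fin r) ∉ S) :
    Rch S (i, j, k) (i', j, k) := by
  have h : (i : ℕ) + ((i' : ℕ) - (i : ℕ)) < p := by omega
  have e1 : (⟨(i : ℕ), by omega⟩ : Fin p) = i := by ext; simp
  have e2 : (⟨(i : ℕ) + ((i' : ℕ) - (i : ℕ)), h⟩ : Fin p) = i' := by ext; simp; omega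
  have := chainX_aux (S := S) j k ((i' : ℕ) - (i : ℕ)) (i : ℕ) h
    (fun t ht1 ht2 => hfree t ht1 (by omega))
  rwa [e1, e2] at this

lemma chainX_seg (i i' : Fin p) (j : Fin q) (k : Fin r)
    (hfree : ∀ t : Fin p, min (i : ℕ) (i' : ℕ) ≤ (t : ℕ) → (t : ℕ) ≤ max (i : ℕ) (i' : ℕ) →
      ((t, j, k) : Fin p × Fin q × Fin r) ∉ S) :
    Rch S (i, j, k) (i', j, k) := by
  rcases le_total (i : ℕ) (i' : ℕ) with h | h
  · exact chainX_le i i' j k h (fun t ht1 ht2 => hfree t (by omega) (by omega))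
  · exact (chainX_le i' i j k h (fun t ht1 ht2 => hfree t (by omega) (by omega))).symm

lemma chainY_aux (i : Fin p) (k : Fin r) (hfree : ∀ j : Fin q, ((i, j, k) : Fin p × Fin q × Fin r) ∉ S) :
    ∀ (n a : ℕ) (h : a + n < q),
      Rch S (i, ⟨a, by omega⟩, k) (i, ⟨a + n, h⟩, k) := by
  intro n
  induction n with
  | zero => intro a h; exact Rch.refl (hfree _)
  | succ n ih =>
    intro a h
    have h' : a + n < q := by omega
    exact (ih a h').trans (Rch_adj (hfree _) (hfree _) (adjY _ _ _ _ (by simp only [Fin.val_mk]; try omega)))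

lemma chainY_full (i : Fin p) (k : Fin r)
    (hfree : ∀ j : Fin q, ((i, j, k) : Fin p × Fin q × Fin r) ∉ S) (j j' : Fin q) :
    Rch S (i, j, k) (i, j', k) := by
  rcases le_total (j : ℕ) (j' : ℕ) with h | h
  · have hh : (j : ℕ) + ((j' : ℕ) - (j : ℕ)) < q := by omega
    have e1 : (⟨(j : ℕ), by omega⟩ : Fin q) = j := by ext; simp
    have e2 : (⟨(j : ℕ) + ((j' : ℕ) - (j : ℕ)), hh⟩ : Fin q) = j' := by ext; simp; omega
    have := chainY_aux (S := S) i k hfree ((j' : ℕ) - (j : ℕ)) (j : ℕ) hh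
    rwa [e1, e2] at this
  · have hh : (j' : ℕ) + ((j : ℕ) - (j' : ℕ)) < q := by omega
    have e1 : (⟨(j' : ℕ), by omega⟩ : Fin q) = j' := by ext; simp
    have e2 : (⟨(j' : ℕ) + ((j : ℕ) - (j' : ℕ)), hh⟩ : Fin q) = j := by ext; simp; omega
    have := chainY_aux (S := S) i k hfree ((j : ℕ) - (j' : ℕ)) (j' : ℕ) hh
    rw [e1, e2] at this
    exact this.symm

lemma chainZ_aux (i : Fin p) (j : Fin q) (hfree : ∀ k : Fin r, ((i, j, k) : Fin p × Fin q × Fin r) ∉ S) :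
    ∀ (n a : ℕ) (h : a + n < r),
      Rch S (i, j, ⟨a, by omega⟩) (i, j, ⟨a + n, h⟩) := by
  intro n
  induction n with
  | zero => intro a h; exact Rch.refl (hfree _)
  | succ n ih =>
    intro a h
    have h' : a + n < r := by omega
    exact (ih a h').trans (Rch_adj (hfree _) (hfree _) (adjZ _ _ _ _ (by simp only [Fin.val_mk]; try omega)))

lemma chainZ_full (i : Fin p) (j : Fin q)
    (hfree : ∀ k : Fin r, ((i, j, k) : Fin p × Fin q × Fin r) ∉ S) (k k' : Fin r) :
    Rch S (i, j, k) (i, j, k') := by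
  rcases le_total (k : ℕ) (k' : ℕ) with h | h
  · have hh : (k : ℕ) + ((k' : ℕ) - (k : ℕ)) < r := by omega
    have e1 : (⟨(k : ℕ), by omega⟩ : Fin r) = k := by ext; simp
    have e2 : (⟨(k : ℕ) + ((k' : ℕ) - (k : ℕ)), hh⟩ : Fin r) = k' := by ext; simp; omega
    have := chainZ_aux (S := S) i j hfree ((k' : ℕ) - (k : ℕ)) (k : ℕ) hh
    rwa [e1, e2] at this
  · have hh : (k' : ℕ) + ((k : ℕ) - (k' : ℕ)) < r := by omega
    have e1 : (⟨(k' : ℕ), by omega⟩ : Fin r) = k' := by ext; simp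
    have e2 : (⟨(k' : ℕ) + ((k : ℕ) - (k' : ℕ)), hh⟩ : Fin r) = k := by ext; simp; omega
    have := chainZ_aux (S := S) i j hfree ((k : ℕ) - (k' : ℕ)) (k' : ℕ) hh
    rw [e1, e2] at this
    exact this.symm

noncomputable section
open scoped Classical
open Finset

variable (S)

/-- The part of `S` in plane `i`. -/
def planeS (i : Fin p) : Finset (Fin p × Fin q × Fin r) :=
  univ.filter (fun v => v ∈ S ∧ v.1 = i)

/-- Number of separator vertices in plane `i`. -/
def siN (i : Fin p) : ℕ := (planeS S i).card

def hitR (i : Fin p) : Finset (Fin r) := (planeS S i).image (fun v => v.2.2)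
def hitC (i : Fin p) : Finset (Fin q) := (planeS S i).image (fun v => v.2.1)
def SCell (i : Fin p) : Finset (Fin q × Fin r) := (planeS S i).image (fun v => v.2)

variable {S}

lemma card_hitR (i : Fin p) : (hitR S i).card ≤ siN S i := card_image_le
lemma card_hitC (i : Fin p) : (hitC S i).card ≤ siN S i := card_image_le
lemma card_SCell (i : Fin p) : (SCell S i).card ≤ siN S i := card_image_le

lemma notMem_hitR {i : Fin p} {k : Fin r} (h : k ∉ hitR S i) :
    ∀ j : Fin q, ((i, j, k) : Fin p × Fin q × Fin r) ∉ S := by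
  intro j hj
  exact h (Finset.mem_image.2 ⟨(i, j, k), by simp [planeS, hj], rfl⟩)

lemma notMem_hitC {i : Fin p} {j : Fin q} (h : j ∉ hitC S i) :
    ∀ k : Fin r, ((i, j, k) : Fin p × Fin q × Fin r) ∉ S := by
  intro k hk
  exact h (Finset.mem_image.2 ⟨(i, j, k), by simp [planeS, hk], rfl⟩)

lemma exists_freeRow {i : Fin p} (h : siN S i < r) :
    ∃ k : Fin r, ∀ j : Fin q, ((i, j, k) : Fin p × Fin q × Fin r) ∉ S := by
  have hc : ((hitR S i)ᶜ).Nonempty := by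
    rw [← Finset.card_pos, Finset.card_compl, Fintype.card_fin]
    have := card_hitR (S := S) i
    omega
  obtain ⟨k, hk⟩ := hc
  exact ⟨k, notMem_hitR (Finset.mem_compl.1 hk)⟩

lemma exists_freeCol {i : Fin p} (h : siN S i < q) :
    ∃ j : Fin q, ∀ k : Fin r, ((i, j, k) : Fin p × Fin q × Fin r) ∉ S := by
  have hc : ((hitC S i)ᶜ).Nonempty := by
    rw [← Finset.card_pos, Finset.card_compl, Fintype.card_fin]
    have := card_hitC (S := S) i
    omega
  obtain ⟨j, hj⟩ := hc
  exact ⟨j, notMem_hitC (Finset.mem_compl.1 hj)⟩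

variable (S)

/-- A representative vertex of the "giant" of plane `i` : the crossing of a free
column and a free row. -/
def rep (hq0 : 0 < q) (hr0 : 0 < r) (i : Fin p) : Fin p × Fin q × Fin r :=
  if h : (∃ j : Fin q, ∀ k' : Fin r, ((i, j, k') : Fin p × Fin q × Fin r) ∉ S) ∧
      (∃ k : Fin r, ∀ j' : Fin q, ((i, j', k) : Fin p × Fin q × Fin r) ∉ S)
  then (i, h.1.choose, h.2.choose) else (i, ⟨0, hq0⟩, ⟨0, hr0⟩)

/-- The footprint of the giant of plane `i`. -/
def Fset (hq0 : 0 < q) (hr0 : 0 < r) (i : Fin p) : Finset (Fin q × Fin r) :=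
  univ.filter (fun c => Rch S (i, c.1, c.2) (rep S hq0 hr0 i))

variable {S}

lemma rep_fst (hq0 : 0 < q) (hr0 : 0 < r) (i : Fin p) : (rep S hq0 hr0 i).1 = i := by
  rw [rep]; split <;> rfl

lemma rep_colFree (hq0 : 0 < q) (hr0 : 0 < r) {i : Fin p}
    (hgood : siN S i < r) (hrq : r ≤ q) :
    ∀ k' : Fin r, ((i, (rep S hq0 hr0 i).2.1, k') : Fin p × Fin q × Fin r) ∉ S := by
  have hcond : (∃ j : Fin q, ∀ k' : Fin r, ((i, j, k') : Fin p × Fin q × Fin r) ∉ S) ∧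
      (∃ k : Fin r, ∀ j' : Fin q, ((i, j', k) : Fin p × Fin q × Fin r) ∉ S) :=
    ⟨exists_freeCol (lt_of_lt_of_le hgood hrq), exists_freeRow hgood⟩
  rw [rep, dif_pos hcond]
  exact hcond.1.choose_spec

lemma rep_rowFree (hq0 : 0 < q) (hr0 : 0 < r) {i : Fin p}
    (hgood : siN S i < r) (hrq : r ≤ q) :
    ∀ j' : Fin q, ((i, j', (rep S hq0 hr0 i).2.2) : Fin p × Fin q × Fin r) ∉ S := by
  have hcond : (∃ j : Fin q, ∀ k' : Fin r, ((i, j, k') : Fin p × Fin q × Fin r) ∉ S) ∧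
      (∃ k : Fin r, ∀ j' : Fin q, ((i, j', k) : Fin p × Fin q × Fin r) ∉ S) :=
    ⟨exists_freeCol (lt_of_lt_of_le hgood hrq), exists_freeRow hgood⟩
  rw [rep, dif_pos hcond]
  exact hcond.2.choose_spec

/-- Any vertex on a free row of a good plane reaches the representative. -/
lemma rch_rep_of_freeRow (hq0 : 0 < q) (hr0 : 0 < r) {i : Fin p}
    (hgood : siN S i < r) (hrq : r ≤ q) {k : Fin r}
    (hfree : ∀ j : Fin q, ((i, j, k) : Fin p × Fin q × Fin r) ∉ S) (j : Fin q) :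
    Rch S (i, j, k) (rep S hq0 hr0 i) := by
  have h1 : Rch S (i, j, k) (i, (rep S hq0 hr0 i).2.1, k) :=
    chainY_full i k hfree j _
  have h2 : Rch S (i, (rep S hq0 hr0 i).2.1, k)
      (i, (rep S hq0 hr0 i).2.1, (rep S hq0 hr0 i).2.2) :=
    chainZ_full i _ (rep_colFree hq0 hr0 hgood hrq) k _
  have he : ((i, (rep S hq0 hr0 i).2.1, (rep S hq0 hr0 i).2.2) : Fin p × Fin q × Fin r)
      = rep S hq0 hr0 i := by
    have h3 := rep_fst (S := S) hq0 hr0 i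
    exact Prod.ext h3.symm rfl
  rw [he] at h2
  exact h1.trans h2

/-- Any vertex on a free column of a good plane reaches the representative. -/
lemma rch_rep_of_freeCol (hq0 : 0 < q) (hr0 : 0 < r) {i : Fin p}
    (hgood : siN S i < r) (hrq : r ≤ q) {j : Fin q}
    (hfree : ∀ k : Fin r, ((i, j, k) : Fin p × Fin q × Fin r) ∉ S) (k : Fin r) :
    Rch S (i, j, k) (rep S hq0 hr0 i) := by
  have h1 : Rch S (i, j, k) (i, j, (rep S hq0 hr0 i).2.2) :=
    chainZ_full i j hfree k _
  exact h1.trans (rch_rep_of_freeRow hq0 hr0 hgood hrq (rep_rowFree hq0 hr0 hgood hrq) j)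

/-- Footprint covers everything except `S`-cells and (hit col × hit row) cells. -/
lemma card_Fset (hq0 : 0 < q) (hr0 : 0 < r) {i : Fin p}
    (hgood : siN S i < r) (hrq : r ≤ q) :
    q * r ≤ (Fset S hq0 hr0 i).card + siN S i + siN S i * siN S i := by
  have hsub : (univ : Finset (Fin q × Fin r)) ⊆
      Fset S hq0 hr0 i ∪ SCell S i ∪ (hitC S i) ×ˢ (hitR S i) := by
    intro c _
    by_cases hc : c ∈ Fset S hq0 hr0 i
    · exact Finset.mem_union.2 (Or.inl (Finset.mem_union.2 (Or.inl hc)))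
    by_cases hcs : ((i, c.1, c.2) : Fin p × Fin q × Fin r) ∈ S
    · refine Finset.mem_union.2 (Or.inl (Finset.mem_union.2 (Or.inr ?_)))
      exact Finset.mem_image.2 ⟨(i, c.1, c.2), by simp [planeS, hcs], rfl⟩
    · refine Finset.mem_union.2 (Or.inr (Finset.mem_product.2 ⟨?_, ?_⟩))
      · by_contra hj
        exact hc (Finset.mem_filter.2 ⟨Finset.mem_univ _,
          rch_rep_of_freeCol hq0 hr0 hgood hrq (notMem_hitC hj) c.2⟩)
      · by_contra hk
        exact hc (Finset.mem_filter.2 ⟨Finset.mem_univ _,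
          rch_rep_of_freeRow hq0 hr0 hgood hrq (notMem_hitR hk) c.1⟩)
  have h1 := Finset.card_le_card hsub
  rw [Finset.card_univ] at h1
  simp only [Fintype.card_prod, Fintype.card_fin] at h1
  calc q * r ≤ _ := h1
    _ ≤ (Fset S hq0 hr0 i ∪ SCell S i).card + ((hitC S i) ×ˢ (hitR S i)).card :=
        Finset.card_union_le _ _
    _ ≤ ((Fset S hq0 hr0 i).card + (SCell S i).card) + ((hitC S i).card * (hitR S i).card) := by
        gcongr
        · exact Finset.card_union_le _ _
        · rw [Finset.card_product]
    _ ≤ (Fset S hq0 hr0 i).card + siN S i + siN S i * siN S i := by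
        gcongr
        · exact card_SCell i
        · exact card_hitC i
        · exact card_hitR i

end

noncomputable section
open scoped Classical
open Finset

/-- The set of vertices reachable to `w` has the cardinality of the connected
component of `w`, which is bounded by the separator property. -/
lemma card_reach {ε : ℝ} (hS : IsSeparator (grid3 p q r) ε S)
    {w : Fin p × Fin q × Fin r} (hw : w ∉ S) :
    ((univ.filter (fun v => Rch S v w)).card : ℝ) ≤ ε * (p * q * r) := by
  have hw' : w ∈ Sᶜ := hw
  set C := ((grid3 p q r).induce Sᶜ).connectedComponentMk ⟨w, hw'⟩ with hC
  have h1 := hS C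
  have himg : Subtype.val '' C.supp = ↑(univ.filter (fun v => Rch S v w)) := by
    ext v
    simp only [Set.mem_image, Finset.coe_filter, Set.mem_setOf_eq, Finset.mem_univ,
      true_and, SimpleGraph.ConnectedComponent.mem_supp_iff, hC]
    constructor
    · rintro ⟨u, hu, rfl⟩
      have hre := (SimpleGraph.ConnectedComponent.eq.1 hu)
      exact ⟨u.2, hw', by simpa using hre⟩
    · rintro ⟨hv, hw2, hre⟩
      refine ⟨⟨v, hv⟩, ?_, rfl⟩
      exact SimpleGraph.ConnectedComponent.eq.2 (by simpa using hre)
  have h2 : C.supp.ncard = (univ.filter (fun v => Rch S v w)).card := by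
    rw [← Set.ncard_image_of_injective C.supp Subtype.val_injective, himg,
      Set.ncard_coe_finset]
  rw [h2] at h1
  calc ((univ.filter (fun v => Rch S v w)).card : ℝ) ≤ ε * Fintype.card (Fin p × Fin q × Fin r) := h1
    _ = ε * (p * q * r) := by
        rw [Fintype.card_prod, Fintype.card_prod, Fintype.card_fin, Fintype.card_fin,
          Fintype.card_fin]
        push_cast; ring

/-- Footprints of planes whose representatives all reach `w` pack disjointly into
the component of `w`. -/
lemma sum_F_le (hq0 : 0 < q) (hr0 : 0 < r) (w : Fin p × Fin q × Fin r)
    (T : Finset (Fin p)) (hT : ∀ i ∈ T, Rch S (rep S hq0 hr0 i) w) :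
    ∑ i ∈ T, (Fset S hq0 hr0 i).card ≤ (univ.filter (fun v => Rch S v w)).card := by
  have hinj : ∀ i : Fin p, Function.Injective
      (fun c : Fin q × Fin r => ((i, c.1, c.2) : Fin p × Fin q × Fin r)) := by
    intro i c c' h
    simpa [Prod.ext_iff] using h
  have hdisj : ∀ i1 ∈ T, ∀ i2 ∈ T, i1 ≠ i2 →
      Disjoint ((Fset S hq0 hr0 i1).image (fun c => ((i1, c.1, c.2) : Fin p × Fin q × Fin r)))
        ((Fset S hq0 hr0 i2).image (fun c => ((i2, c.1, c.2) : Fin p × Fin q × Fin r))) := by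
    intro i1 _ i2 _ hne
    rw [Finset.disjoint_left]
    rintro v hv1 hv2
    obtain ⟨c1, -, rfl⟩ := Finset.mem_image.1 hv1
    obtain ⟨c2, -, he⟩ := Finset.mem_image.1 hv2
    exact hne (congrArg Prod.fst he).symm
  calc ∑ i ∈ T, (Fset S hq0 hr0 i).card
      = ∑ i ∈ T, ((Fset S hq0 hr0 i).image
          (fun c => ((i, c.1, c.2) : Fin p × Fin q × Fin r))).card := by
        refine Finset.sum_congr rfl (fun i _ => ?_)
        rw [Finset.card_image_of_injective _ (hinj i)]
    _ = (T.biUnion (fun i => (Fset S hq0 hr0 i).image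
          (fun c => ((i, c.1, c.2) : Fin p × Fin q × Fin r)))).card :=
        (Finset.card_biUnion hdisj).symm
    _ ≤ (univ.filter (fun v => Rch S v w)).card := by
        apply Finset.card_le_card
        intro v hv
        obtain ⟨i, hiT, hv⟩ := Finset.mem_biUnion.1 hv
        obtain ⟨c, hc, rfl⟩ := Finset.mem_image.1 hv
        have h1 : Rch S (i, c.1, c.2) (rep S hq0 hr0 i) := (Finset.mem_filter.1 hc).2
        exact Finset.mem_filter.2 ⟨Finset.mem_univ _, h1.trans (hT i hiT)⟩

/-- Pillar counting: if the giants of two planes lie in different components, then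
every common footprint cell contributes a separator vertex. -/
lemma pillar (hq0 : 0 < q) (hr0 : 0 < r) {i i' : Fin p}
    (hne : ¬ Rch S (rep S hq0 hr0 i) (rep S hq0 hr0 i')) :
    (Fset S hq0 hr0 i ∩ Fset S hq0 hr0 i').card ≤ (univ.filter (· ∈ S)).card := by
  have hex : ∀ c ∈ Fset S hq0 hr0 i ∩ Fset S hq0 hr0 i',
      ∃ t : Fin p, ((t, c.1, c.2) : Fin p × Fin q × Fin r) ∈ S := by
    intro c hc
    by_contra hno
    push_neg at hno
    have h1 : Rch S (i, c.1, c.2) (rep S hq0 hr0 i) :=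
      (Finset.mem_filter.1 (Finset.mem_inter.1 hc).1).2
    have h2 : Rch S (i', c.1, c.2) (rep S hq0 hr0 i') :=
      (Finset.mem_filter.1 (Finset.mem_inter.1 hc).2).2
    have h3 : Rch S (i, c.1, c.2) (i', c.1, c.2) :=
      chainX_seg i i' c.1 c.2 (fun t _ _ => hno t)
    exact hne ((h1.symm.trans h3).trans h2)
  classical
  set f : Fin q × Fin r → Fin p × Fin q × Fin r := fun c =>
    if h : ∃ t : Fin p, ((t, c.1, c.2) : Fin p × Fin q × Fin r) ∈ S
    then (h.choose, c.1, c.2) else (i, c.1, c.2) with hf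
  apply Finset.card_le_card_of_injOn f
  · intro c hc
    have h := hex c hc
    rw [hf]
    simp only [dif_pos h]
    exact Finset.mem_filter.2 ⟨Finset.mem_univ _, h.choose_spec⟩
  · intro c1 _ c2 _ he
    have h1 : (f c1).2 = (c1.1, c1.2) := by rw [hf]; dsimp only; split <;> rfl
    have h2 : (f c2).2 = (c2.1, c2.2) := by rw [hf]; dsimp only; split <;> rfl
    have := h1 ▸ h2 ▸ congrArg Prod.snd he
    simpa [Prod.ext_iff] using this

end


lemma cubic_pos {ε : ℝ} (hε : 1/2 < ε) (hε1 : ε < 1) :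
    0 < 2*ε*(3*ε-1) - (1-ε)^2*(1+ε) := by nlinarith [sq_nonneg (ε - 1/2), sq_nonneg ε]

lemma quad_pos {ε : ℝ} (hε : 1/2 < ε) (hε1 : ε < 1) : (0:ℝ) < ε*ε + 2*ε - 1 := by
  nlinarith

lemma sq_lt_one {ε : ℝ} (hε : 1/2 < ε) (hε1 : ε < 1) : (0:ℝ) < 1 - ε*ε := by
  nlinarith

lemma pos_cancel {c x : ℝ} (hc : 0 < c) (h : 0 < c * x) : 0 < x :=
  lt_of_mul_lt_mul_left (by rw [mul_zero]; exact h) hc.le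

lemma final_arith (ε P Q R β g a sg sa sb hR sR : ℝ)
    (hε : 1/2 < ε) (hε1 : ε < 1)
    (hP : Q ≤ P) (hQR : R ≤ (1-ε)*Q) (hR1 : 1 ≤ R)
    (hβ0 : 0 ≤ β) (hg0 : 0 ≤ g) (ha0 : 0 ≤ a)
    (hsg0 : 0 ≤ sg) (hsa0 : 0 ≤ sa) (hsb0 : 0 ≤ sb) (hh0 : 0 ≤ hR)
    (hC1 : g + a + β = P) (hC2 : sg + sa + sb = sR)
    (hC3 : β * R ≤ sb)
    (hC4 : g*(Q*R) ≤ ε*(P*Q*R) + R*sg)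
    (hC5 : a*(Q*R) ≤ a*(sR + R*hR) + R*sa)
    (hC6 : (g+a)*hR ≤ sg + sa)
    (hC7 : hR + 1 ≤ R)
    (hcon2 : (1+ε)*sR < (1-ε)*(Q*R)) : False := by
  have hε0 : (0:ℝ) < ε := by linarith
  have h1me : (0:ℝ) < 1 - ε := by linarith
  have h1pe : (0:ℝ) < 1 + ε := by linarith
  have hR0 : (0:ℝ) < R := by linarith
  have hQ0 : (0:ℝ) < Q := pos_cancel h1me (lt_of_lt_of_le (by linarith) hQR)
  have hP0 : (0:ℝ) < P := by linarith
  have hsR0 : (0:ℝ) ≤ sR := by linarith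
  have hRP : R ≤ (1-ε)*P := by
    linarith [mul_le_mul_of_nonneg_left hP h1me.le]
  have hRQ : R ≤ Q := by
    linarith [mul_nonneg hε0.le hQ0.le]
  have hg : g = P - a - β := by linarith
  have hgq : g*(Q*R) = (P - a - β)*(Q*R) := by rw [hg]
  have hI : (1-ε)*(P*(Q*R)) ≤ (a+β)*(Q*R) + R*sg := by linarith [hC4, hgq]
  have haD : a*(Q*R - sR - R*hR) ≤ R*sa := by linarith [hC5]
  have hsRb : sR < (1-ε)*(Q*R) := by
    linarith [hcon2, mul_nonneg hε0.le hsR0]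
  have hRh : R*hR ≤ R*R - R := by
    linarith [mul_le_mul_of_nonneg_left hC7 hR0.le]
  have hR2 : R*R ≤ (1-ε)*(Q*R) := by
    linarith [mul_le_mul_of_nonneg_right hQR hR0.le]
  have hRh2 : (0:ℝ) ≤ (1-ε)*(Q*R) - R - R*hR := by linarith
  have hquad : (0:ℝ) < ε*ε + 2*ε - 1 := quad_pos hε hε1
  have hQRpos : (0:ℝ) < Q*R := mul_pos hQ0 hR0
  have hQRPR : Q*R ≤ P*R := mul_le_mul_of_nonneg_right hP hR0.le
  have hXpos : 0 < Q*R - sR := by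
    have h' : (1+ε)*sR < (1+ε)*(Q*R) := by
      linarith [hcon2, mul_nonneg hε0.le hQRpos.le]
    linarith [lt_of_mul_lt_mul_left h' h1pe.le]
  have hYpos : 0 < P*R - sR := by linarith
  by_cases hD : Q*R - sR - R*hR < R*R
  · -- Case B2 : the interesting case
    have hDpos : 0 < Q*R - sR - R*hR := by
      have h' : 0 < (1+ε)*(Q*R - sR - R*hR) := by
        linarith [hcon2, hRh2, mul_nonneg hε0.le hRh2,
          mul_pos hquad hQRpos, mul_pos hε0 hR0]
      exact pos_cancel h1pe h'
    have e1a : β*(Q*R - sR - R*hR) ≤ β*(R*R) := mul_le_mul_of_nonneg_left hD.le hβ0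
    have e1b : (Q*R)*(β*(Q*R - sR - R*hR)) ≤ (Q*R)*(β*(R*R)) :=
      mul_le_mul_of_nonneg_left e1a (by positivity)
    have e1c : (Q*R*R)*(β*R) ≤ (Q*R*R)*sb :=
      mul_le_mul_of_nonneg_left hC3 (by positivity)
    have e2 : (a*(Q*R - sR - R*hR))*(Q*R) ≤ (R*sa)*(Q*R) :=
      mul_le_mul_of_nonneg_right haD (by positivity)
    have e3a : (R*sg)*(Q*R - sR - R*hR) ≤ (R*sg)*(R*R) :=
      mul_le_mul_of_nonneg_left hD.le (by positivity)
    have e3b : R*(R*(R*sg)) ≤ Q*(R*(R*sg)) :=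
      mul_le_mul_of_nonneg_right hRQ (by positivity)
    have e4 := mul_le_mul_of_nonneg_right hI hDpos.le
    have hc2r : Q*R*R*sg + Q*R*R*sa + Q*R*R*sb = Q*R*R*sR := by rw [← hC2]; ring
    have h2 : ((1-ε)*P*(Q*R - sR - R*hR))*(Q*R) ≤ (R*sR)*(Q*R) := by
      linarith [e1b, e1c, e2, e3a, e3b, e4, hc2r]
    have h3 : (1-ε)*P*(Q*R - sR - R*hR) ≤ R*sR :=
      le_of_mul_le_mul_right h2 hQRpos
    have h4 : hR*(P*R - sR) ≤ R*sR := by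
      have f1 : R*((g+a)*hR) ≤ R*(sg+sa) := mul_le_mul_of_nonneg_left hC6 hR0.le
      have f2 : hR*(β*R) ≤ hR*sb := mul_le_mul_of_nonneg_left hC3 hh0
      have hc1h : R*hR*g + R*hR*a + R*hR*β = R*hR*P := by rw [← hC1]; ring
      have hc2r2 : R*sg + R*sa + R*sb = R*sR := by rw [← hC2]; ring
      linarith [f1, f2, hc1h, hc2r2,
        mul_nonneg hsb0 (by linarith : (0:ℝ) ≤ R - hR), mul_nonneg hh0 hsR0]
    have hstar : (1-ε)*P*((Q*R - sR)*(P*R - sR)) ≤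
        R*sR*(P*R - sR) + (1-ε)*P*R*(R*sR) := by
      have f1 : ((1-ε)*P*(Q*R - sR - R*hR))*(P*R - sR) ≤ (R*sR)*(P*R - sR) :=
        mul_le_mul_of_nonneg_right h3 hYpos.le
      have f2 : ((1-ε)*P*R)*(hR*(P*R - sR)) ≤ ((1-ε)*P*R)*(R*sR) :=
        mul_le_mul_of_nonneg_left h4 (by positivity)
      linarith [f1, f2]
    -- the reverse strict inequality
    have hu : 0 ≤ (1-ε)*(Q*R) - (1+ε)*sR := by linarith
    have hu' : 0 ≤ (1-ε)*(P*R) - (1+ε)*sR := by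
      linarith [mul_le_mul_of_nonneg_left hQRPR h1me.le]
    have hw' : 0 ≤ (1-ε)*(P*R) - R*R := by
      linarith [mul_le_mul_of_nonneg_right hRP hR0.le]
    have hv : 0 ≤ (1-ε)*P - R := by linarith
    have h3e : (0:ℝ) < 3*ε - 1 := by linarith
    have hm := cubic_pos hε hε1
    have piece1 : 2*ε*(R*sR)*(1+ε) ≤ (1-ε)^2*(P*(Q*R - sR))*(1+ε) := by
      have t1 : 0 ≤ (1-ε)*(1-ε)*P*((1-ε)*(Q*R) - (1+ε)*sR) := by positivity
      have t2 : 0 ≤ ε*R*((1-ε)*(Q*R) - (1+ε)*sR) := by positivity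
      have t3 : 0 ≤ ε*(1-ε)*(Q*R)*((1-ε)*P - R) := by positivity
      linarith [t1, t2, t3]
    have piece2 : 2*ε*(R*R*sR)*((1+ε)*(1+ε)) <
        (3*ε-1)*((Q*R-sR)*(P*R-sR))*((1+ε)*(1+ε)) := by
      have s1 : 0 < ε*(2*ε*(3*ε-1) - (1-ε)^2*(1+ε))*((Q*R)*(P*R)) := by
        have := mul_pos hQRpos (mul_pos hP0 hR0)
        exact mul_pos (mul_pos hε0 hm) (by linarith [this] )
      have s2 : 0 ≤ ε*(1-ε*ε)*((Q*R)*((1-ε)*(P*R) - R*R)) := by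
        exact mul_nonneg (mul_nonneg hε0.le (sq_lt_one hε hε1).le)
          (mul_nonneg hQRpos.le hw')
      have s3 : 0 ≤ ε*(3*ε-1)*((Q*R)*((1-ε)*(P*R) - (1+ε)*sR)) :=
        mul_nonneg (mul_nonneg hε0.le h3e.le) (mul_nonneg hQRpos.le hu')
      have s4 : 0 ≤ ε*(3*ε-1)*((P*R)*((1-ε)*(Q*R) - (1+ε)*sR)) :=
        mul_nonneg (mul_nonneg hε0.le h3e.le)
          (mul_nonneg (mul_pos hP0 hR0).le hu)
      have s5 : 0 ≤ (3*ε-1)*(((1-ε)*(Q*R) - (1+ε)*sR)*((1-ε)*(P*R) - (1+ε)*sR)) :=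
        mul_nonneg h3e.le (mul_nonneg hu hu')
      have s6 : 0 ≤ ε*(1+ε)*((R*R)*((1-ε)*(Q*R) - (1+ε)*sR)) :=
        mul_nonneg (mul_nonneg hε0.le h1pe.le)
          (mul_nonneg (mul_pos hR0 hR0).le hu)
      linarith [s1, s2, s3, s4, s5, s6]
    have piece1' : 2*ε*(R*sR) ≤ (1-ε)^2*(P*(Q*R - sR)) :=
      le_of_mul_le_mul_right piece1 h1pe
    have piece2' : 2*ε*(R*R*sR) < (3*ε-1)*((Q*R-sR)*(P*R-sR)) :=
      lt_of_mul_lt_mul_right piece2 (by positivity)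
    have pm1 : 2*ε*(R*sR)*(P*R - sR) ≤ (1-ε)^2*(P*(Q*R-sR))*(P*R-sR) :=
      mul_le_mul_of_nonneg_right piece1' hYpos.le
    have pm2 : ((1-ε)*P)*(2*ε*(R*R*sR)) < ((1-ε)*P)*((3*ε-1)*((Q*R-sR)*(P*R-sR))) :=
      (mul_lt_mul_iff_right₀ (by positivity)).2 piece2'
    have hstar2 := mul_le_mul_of_nonneg_left hstar hε0.le
    linarith [hstar2, pm1, pm2]
  · -- Case B1
    push_neg at hD
    have ha1 : (a*R)*R ≤ sa*R := by
      linarith [haD, mul_le_mul_of_nonneg_left hD ha0]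
    have ha2 : a*R ≤ sa := le_of_mul_le_mul_right ha1 hR0
    have hfin : (1-ε)*(P*(Q*R)) ≤ Q*sR := by
      have f1 : Q*(a*R) ≤ Q*sa := mul_le_mul_of_nonneg_left ha2 hQ0.le
      have f2 : Q*(β*R) ≤ Q*sb := mul_le_mul_of_nonneg_left hC3 hQ0.le
      have f3 : R*sg ≤ Q*sg := mul_le_mul_of_nonneg_right hRQ hsg0
      have hc2q : Q*sg + Q*sa + Q*sb = Q*sR := by rw [← hC2]; ring
      linarith [hI, f1, f2, f3, hc2q]
    have f1 := mul_le_mul_of_nonneg_left hfin h1pe.le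
    have f2 := mul_lt_mul_of_pos_left hcon2 hQ0
    have f3 := mul_le_mul_of_nonneg_right hP
      (mul_nonneg h1me.le hQRpos.le)
    have f5 : 0 < ε*((1-ε)*(P*(Q*R))) :=
      mul_pos hε0 (mul_pos h1me (mul_pos hP0 hQRpos))
    linarith [f1, f2, f3, f5]

end Grid3Sep

open Finset Grid3Sep

/-- Every `ε`-separator of the `p × q × r` grid graph, for `1/2 < ε < 1` and
`p ≥ q ≥ r/(1-ε)`, has size at least `((1-ε)/(1+ε))·q·r`. -/
theorem grid3_separator (ε : ℝ) (hε : 1/2 < ε) (hε1 : ε < 1)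
    (p q r : ℕ) (hr : 0 < r) (hqp : q ≤ p) (hqr : (r : ℝ) / (1 - ε) ≤ q)
    (S : Set (Fin p × Fin q × Fin r)) (hS : IsSeparator (grid3 p q r) ε S) :
    (1 - ε) / (1 + ε) * q * r ≤ (S.ncard : ℝ) := by
  classical
  have h1me : (0:ℝ) < 1 - ε := by linarith
  have h1pe : (0:ℝ) < 1 + ε := by linarith
  have hε0 : (0:ℝ) < ε := by linarith
  have hrQ : (r:ℝ) ≤ (1-ε) * (q:ℝ) := by
    rw [div_le_iff₀ h1me] at hqr
    linarith
  have hr1 : (1:ℝ) ≤ (r:ℝ) := by exact_mod_cast hr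
  have hq0 : 0 < q := by
    rcases Nat.eq_zero_or_pos q with h | h
    · exfalso; rw [h] at hrQ; push_cast at hrQ; linarith
    · exact h
  have hp0 : 0 < p := lt_of_lt_of_le hq0 hqp
  have hrq : r ≤ q := by
    have h2 : (r:ℝ) ≤ (q:ℝ) := by
      have h3 : (0:ℝ) ≤ ε * q := by positivity
      linarith
    exact_mod_cast h2
  set s : ℕ := (univ.filter (· ∈ S)).card with hs_def
  have hncard : (S.ncard : ℝ) = (s:ℝ) := by
    have h1 : S.ncard = s := by
      rw [hs_def, ← Set.ncard_coe_finset]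
      congr 1
      ext v; simp
    rw [h1]
  rw [hncard]
  by_contra hcon
  push_neg at hcon
  have hcon2 : (1+ε) * (s:ℝ) < (1-ε) * ((q:ℝ)*(r:ℝ)) := by
    have h1 := (mul_lt_mul_iff_right₀ h1pe).2 hcon
    have h2 : (1+ε) * ((1-ε)/(1+ε) * q * r) = (1-ε)*((q:ℝ)*(r:ℝ)) := by
      field_simp
    linarith [h1, h2.le, h2.ge]
  -- sum of plane counts
  have hsum : ∑ i : Fin p, siN S i = s := by
    have h1 : s = ∑ i : Fin p, ((univ.filter (· ∈ S)).filter (fun v => v.1 = i)).card := by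
      rw [hs_def]
      exact Finset.card_eq_sum_card_fiberwise (fun x _ => mem_univ x.1)
    rw [h1]
    apply Finset.sum_congr rfl
    intro i _
    rw [siN, planeS, Finset.filter_filter]
  set Good := univ.filter (fun i : Fin p => siN S i < r) with hGoodd
  set Bad := univ.filter (fun i : Fin p => ¬ siN S i < r) with hBadd
  have hGB : Good.card + Bad.card = p := by
    rw [hGoodd, hBadd, Finset.card_filter_add_card_filter_not, Finset.card_univ,
      Fintype.card_fin]
  have hsplitGB : ∑ i ∈ Good, siN S i + ∑ i ∈ Bad, siN S i = s := by
    rw [← hsum, hGoodd, hBadd]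
    exact Finset.sum_filter_add_sum_filter_not univ _ _
  have hBadr : Bad.card * r ≤ ∑ i ∈ Bad, siN S i := by
    have h1 := Finset.card_nsmul_le_sum Bad (siN S) r
      (fun i hi => not_lt.1 (by rw [hBadd] at hi; exact (mem_filter.1 hi).2))
    simpa [smul_eq_mul] using h1
  have hGoodne : Good.Nonempty := by
    rw [Finset.nonempty_iff_ne_empty]
    intro hemp
    have h1 : Bad.card = p := by
      have h2 : Good.card = 0 := by simp [hemp]
      omega
    have h2 : p * r ≤ s := by
      calc p * r = Bad.card * r := by rw [h1]
        _ ≤ ∑ i ∈ Bad, siN S i := hBadr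
        _ ≤ s := by omega
    have h3 : (p:ℝ) * r ≤ (s:ℝ) := by exact_mod_cast h2
    have h4 : (q:ℝ) ≤ (p:ℝ) := by exact_mod_cast hqp
    have h5 : (q:ℝ)*(r:ℝ) ≤ (p:ℝ)*(r:ℝ) := by nlinarith
    have h6 : (0:ℝ) ≤ ε * ((q:ℝ)*(r:ℝ)) := by positivity
    have h7 : (0:ℝ) ≤ ε * (s:ℝ) := by positivity
    linarith
  obtain ⟨istar, histar, hmin⟩ := Finset.exists_min_image Good (siN S) hGoodne
  have hstar_good : siN S istar < r := by
    rw [hGoodd] at histar; exact (mem_filter.1 histar).2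
  set wstar := rep S hq0 hr istar with hws
  have hwfst : wstar.1 = istar := rep_fst hq0 hr istar
  have hwS : wstar ∉ S := by
    have h1 := rep_colFree hq0 hr hstar_good hrq wstar.2.2
    have he : ((istar, wstar.2.1, wstar.2.2) : Fin p × Fin q × Fin r) = wstar := by
      rw [← hwfst]
    rw [← hws, he] at h1
    exact h1
  set Cls := Good.filter (fun i => Rch S (rep S hq0 hr i) wstar) with hClsd
  set Alien := Good.filter (fun i => ¬ Rch S (rep S hq0 hr i) wstar) with hAliend
  have hCA : Cls.card + Alien.card = Good.card := by
    rw [hClsd, hAliend]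
    exact Finset.card_filter_add_card_filter_not _
  have hsplitCA : ∑ i ∈ Cls, siN S i + ∑ i ∈ Alien, siN S i = ∑ i ∈ Good, siN S i := by
    rw [hClsd, hAliend]
    exact Finset.sum_filter_add_sum_filter_not Good _ _
  -- key per-plane bound
  have hkey : ∀ i ∈ Good, q*r ≤ (Fset S hq0 hr i).card + r * siN S i := by
    intro i hi
    rw [hGoodd] at hi
    have hg : siN S i < r := (mem_filter.1 hi).2
    have h1 := card_Fset hq0 hr hg hrq
    have h2 : siN S i + siN S i * siN S i ≤ r * siN S i := by
      have h3 : siN S i * (1 + siN S i) ≤ siN S i * r := Nat.mul_le_mul_left _ (by omega)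
      calc siN S i + siN S i * siN S i = siN S i * (1 + siN S i) := by ring
        _ ≤ siN S i * r := h3
        _ = r * siN S i := Nat.mul_comm _ _
    omega
  -- volume bound (real)
  have hVnat : Cls.card * (q*r) ≤ (∑ i ∈ Cls, (Fset S hq0 hr i).card) + r * ∑ i ∈ Cls, siN S i := by
    calc Cls.card * (q*r) = ∑ _i ∈ Cls, (q*r) := by rw [Finset.sum_const, smul_eq_mul]
      _ ≤ ∑ i ∈ Cls, ((Fset S hq0 hr i).card + r * siN S i) := by
          refine Finset.sum_le_sum (fun i hi => hkey i ?_)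
          rw [hClsd] at hi; exact (mem_filter.1 hi).1
      _ = _ := by rw [Finset.sum_add_distrib, Finset.mul_sum]
  have hFsum : ((∑ i ∈ Cls, (Fset S hq0 hr i).card : ℕ) : ℝ) ≤ ε * ((p:ℝ)*(q:ℝ)*(r:ℝ)) := by
    have h1 : ∑ i ∈ Cls, (Fset S hq0 hr i).card ≤
        (univ.filter (fun v => Rch S v wstar)).card := by
      refine sum_F_le hq0 hr wstar Cls (fun i hi => ?_)
      rw [hClsd] at hi; exact (mem_filter.1 hi).2
    calc ((∑ i ∈ Cls, (Fset S hq0 hr i).card : ℕ) : ℝ)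
        ≤ ((univ.filter (fun v => Rch S v wstar)).card : ℝ) := by exact_mod_cast h1
      _ ≤ ε * ((p:ℝ)*(q:ℝ)*(r:ℝ)) := by
          have := card_reach hS hwS
          push_cast at this ⊢
          linarith
  have hC4 : (Cls.card:ℝ) * ((q:ℝ)*(r:ℝ)) ≤
      ε*((p:ℝ)*(q:ℝ)*(r:ℝ)) + (r:ℝ)*((∑ i ∈ Cls, siN S i : ℕ) : ℝ) := by
    have h1 : ((Cls.card * (q*r) : ℕ) : ℝ) ≤
        ((∑ i ∈ Cls, (Fset S hq0 hr i).card : ℕ) : ℝ) + ((r * ∑ i ∈ Cls, siN S i : ℕ) : ℝ) := by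
      exact_mod_cast hVnat
    have h2 := hFsum
    push_cast at h1 h2 ⊢
    linarith [h2]
  -- pillar bound per alien plane
  have hPil : ∀ i ∈ Alien, q*r ≤ s + r * siN S i + r * siN S istar := by
    intro i hi
    rw [hAliend] at hi
    have higood : i ∈ Good := (mem_filter.1 hi).1
    have hne : ¬ Rch S (rep S hq0 hr i) (rep S hq0 hr istar) := by
      rw [← hws]; exact (mem_filter.1 hi).2
    have e1 : q*r ≤ (Fset S hq0 hr i).card + r * siN S i := hkey i higood
    have e2 : q*r ≤ (Fset S hq0 hr istar).card + r * siN S istar := hkey istar histar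
    have e3 : (Fset S hq0 hr i ∩ Fset S hq0 hr istar).card ≤ s := by
      rw [hs_def]
      exact pillar hq0 hr hne
    have e4 : (Fset S hq0 hr i ∪ Fset S hq0 hr istar).card ≤ q*r := by
      have h5 := Finset.card_le_univ (Fset S hq0 hr i ∪ Fset S hq0 hr istar)
      simpa [Finset.card_univ] using h5
    have e5 := Finset.card_inter_add_card_union (Fset S hq0 hr i) (Fset S hq0 hr istar)
    omega
  have hAnat : Alien.card * (q*r) ≤
      Alien.card * (s + r * siN S istar) + r * ∑ i ∈ Alien, siN S i := by
    calc Alien.card * (q*r) = ∑ _i ∈ Alien, (q*r) := by rw [Finset.sum_const, smul_eq_mul]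
      _ ≤ ∑ i ∈ Alien, (s + r * siN S istar + r * siN S i) :=
          Finset.sum_le_sum (fun i hi => by
            have := hPil i hi; omega)
      _ = Alien.card * (s + r * siN S istar) + r * ∑ i ∈ Alien, siN S i := by
          rw [Finset.sum_add_distrib, Finset.sum_const, smul_eq_mul, Finset.mul_sum]
  -- minimality
  have hMin : Good.card * siN S istar ≤ ∑ i ∈ Good, siN S i := by
    have h1 := Finset.card_nsmul_le_sum Good (siN S) (siN S istar) hmin
    simpa [smul_eq_mul] using h1
  -- pass to the reals
  refine final_arith ε (p:ℝ) (q:ℝ) (r:ℝ) (Bad.card:ℝ) (Cls.card:ℝ) (Alien.card:ℝ)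
    ((∑ i ∈ Cls, siN S i : ℕ) : ℝ) ((∑ i ∈ Alien, siN S i : ℕ) : ℝ)
    ((∑ i ∈ Bad, siN S i : ℕ) : ℝ) ((siN S istar : ℕ) : ℝ) (s:ℝ)
    hε hε1 (by exact_mod_cast hqp) hrQ hr1
    (by positivity) (by positivity) (by positivity)
    (by positivity) (by positivity) (by positivity) (by positivity)
    ?_ ?_ ?_ hC4 ?_ ?_ ?_ hcon2
  · -- C1
    have h1 : Cls.card + Alien.card + Bad.card = p := by omega
    exact_mod_cast h1
  · -- C2
    have h1 : ∑ i ∈ Cls, siN S i + ∑ i ∈ Alien, siN S i + ∑ i ∈ Bad, siN S i = s := by omega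
    exact_mod_cast h1
  · -- C3
    exact_mod_cast hBadr
  · -- C5
    exact_mod_cast hAnat
  · -- C6
    have h1 : (Cls.card + Alien.card) * siN S istar ≤
        ∑ i ∈ Cls, siN S i + ∑ i ∈ Alien, siN S i := by
      rw [hCA, hsplitCA]
      exact hMin
    exact_mod_cast h1
  · -- C7
    have h1 : siN S istar + 1 ≤ r := hstar_good
    exact_mod_cast h1
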